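/- arXiv:2311.01754 — 2 statements merged into one kernel-verified Lean document; each statement's English description precedes it below -/
import Mathlib

section
/- Let Σ = Σ_B ⋉_Φ Σ_F be a twisted product of fans. A collection of rays {0}×ρ_{i_1}, …, {0}×ρ_{i_l}, τ̃_{j_1}, …, τ̃_{j_m} of Σ spans a cone of Σ if and only if ρ_{i_1}, …, ρ_{i_l} span a cone of Σ_F and τ_{j_1}, …, τ_{j_m} span a cone of Σ_B. In particular, the Stanley–Reisner ideal of Σ equals I_{Σ_B} + I_{Σ_F} in ℝ[x_1,…,x_r, y_1,…,y_s]. -/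
open scoped Pointwise

noncomputable section

/-- A convex polyhedral cone: the set of nonnegative linear combinations of finitely many
vectors, i.e. the span over the semiring of nonnegative reals of a finite set. -/
def IsPolyCone {E : Type*} [AddCommMonoid E] [Module ℝ E] (C : Set E) : Prop :=
  ∃ s : Finset E,
    C = (Submodule.span {c : ℝ // 0 ≤ c} (s : Set E) : Submodule {c : ℝ // 0 ≤ c} E)

/-- Nonnegative span of a set. -/
def posSpan {E : Type*} [AddCommMonoid E] [Module ℝ E] (s : Set E) : Set E :=
  (Submodule.span {c : ℝ // 0 ≤ c} s : Submodule {c : ℝ // 0 ≤ c} E)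

/-- The graph of a map `Φ` over a set `σ`. -/
def graphOver {k n : ℕ} (Φ : (Fin k → ℝ) → (Fin n → ℝ)) (σ : Set (Fin k → ℝ)) :
    Set ((Fin k → ℝ) × (Fin n → ℝ)) :=
  (fun x => (x, Φ x)) '' σ

/-- The twisted cone `σ̃ + τ`: the Minkowski sum of the graph of `Φ` over `σ` with
`τ` embedded as `{0} × τ`. -/
def twistedCone {k n : ℕ} (Φ : (Fin k → ℝ) → (Fin n → ℝ)) (σ : Set (Fin k → ℝ))
    (τ : Set (Fin n → ℝ)) : Set ((Fin k → ℝ) × (Fin n → ℝ)) :=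
  graphOver Φ σ + ({0} : Set (Fin k → ℝ)) ×ˢ τ

/-- A face of a convex cone `C`: the intersection of `C` with a supporting hyperplane,
together with `C` itself. -/
def IsFaceOf {E : Type*} [AddCommMonoid E] [Module ℝ E] (F C : Set E) : Prop :=
  F = C ∨ ∃ ℓ : E →ₗ[ℝ] ℝ, (∀ x ∈ C, ℓ x ≤ 0) ∧ F = {x ∈ C | ℓ x = 0}

/-- A fan: a finite collection of strongly convex polyhedral cones, closed under taking
faces, and such that the intersection of any two of its cones is a face of each. -/
def IsFan {E : Type*} [AddCommGroup E] [Module ℝ E] (F : Set (Set E)) : Prop :=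
  F.Finite ∧
  (∀ C ∈ F, IsPolyCone C ∧ C ∩ (-C) = {0}) ∧
  (∀ C ∈ F, ∀ G : Set E, IsFaceOf G C → G ∈ F) ∧
  (∀ C ∈ F, ∀ D ∈ F, IsFaceOf (C ∩ D) C ∧ IsFaceOf (C ∩ D) D)

/-- `Φ` is piecewise linear with respect to a fan `F`: it is continuous on the support
`|F|` and restricts to a linear map on each cone of `F`. -/
def IsPLOn {k n : ℕ} (Φ : (Fin k → ℝ) → (Fin n → ℝ)) (F : Set (Set (Fin k → ℝ))) : Prop :=
  ContinuousOn Φ (⋃₀ F) ∧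
  ∀ σ ∈ F, ∃ ℓ : (Fin k → ℝ) →ₗ[ℝ] (Fin n → ℝ), ∀ x ∈ σ, Φ x = ℓ x

/-- The twisted product of fans `Σ_B ⋉_Φ Σ_F = {σ̃ + τ : σ ∈ Σ_B, τ ∈ Σ_F}`. -/
def twistedFan {k n : ℕ} (Φ : (Fin k → ℝ) → (Fin n → ℝ)) (SB : Set (Set (Fin k → ℝ)))
    (SF : Set (Set (Fin n → ℝ))) : Set (Set ((Fin k → ℝ) × (Fin n → ℝ))) :=
  {C | ∃ σ ∈ SB, ∃ τ ∈ SF, C = twistedCone Φ σ τ}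

/-- A ray: a one-dimensional cone, i.e. the nonnegative span of a single nonzero vector. -/
def IsRayCone {E : Type*} [AddCommMonoid E] [Module ℝ E] (C : Set E) : Prop :=
  ∃ v : E, v ≠ 0 ∧ C = posSpan {v}

section Aux

local notation "R0" => {c : ℝ // 0 ≤ c}

variable {E F : Type*} [AddCommMonoid E] [Module ℝ E] [AddCommMonoid F] [Module ℝ F]

theorem posSpan_zero_mem (s : Set E) : (0 : E) ∈ posSpan s :=
  Submodule.zero_mem _

theorem posSpan_subset (s : Set E) : s ⊆ posSpan s :=
  Submodule.subset_span

theorem posSpan_union (s t : Set E) : posSpan (s ∪ t) = posSpan s + posSpan t := by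
  unfold posSpan
  rw [Submodule.span_union, Submodule.coe_sup]

theorem posSpan_image (g : E →ₗ[ℝ] F) (s : Set E) :
    posSpan (g '' s) = g '' posSpan s := by
  unfold posSpan
  have : Submodule.map (g.restrictScalars R0) (Submodule.span R0 s)
      = Submodule.span R0 (g '' s) := by
    rw [Submodule.map_span]; rfl
  rw [← this]
  rfl

theorem posSpan_union_zero (s t : Set E) (hs : ∀ x ∈ s, x = 0) :
    posSpan (s ∪ t) = posSpan t := by
  unfold posSpan
  have h1 : Submodule.span R0 s = ⊥ := Submodule.span_eq_bot.2 hs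
  rw [Submodule.span_union, h1, bot_sup_eq]

end Aux

section Aux2

variable {k n : ℕ}

/-- The embedding `x ↦ (x, ℓ x)`. -/
def Lmap (ℓ : (Fin k → ℝ) →ₗ[ℝ] (Fin n → ℝ)) :
    (Fin k → ℝ) →ₗ[ℝ] (Fin k → ℝ) × (Fin n → ℝ) :=
  LinearMap.prod LinearMap.id ℓ

/-- The embedding `y ↦ (0, y)`. -/
def Rmap : (Fin n → ℝ) →ₗ[ℝ] (Fin k → ℝ) × (Fin n → ℝ) :=
  LinearMap.prod 0 LinearMap.id

@[simp] theorem Lmap_apply (ℓ : (Fin k → ℝ) →ₗ[ℝ] (Fin n → ℝ)) (x : Fin k → ℝ) :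
    Lmap ℓ x = (x, ℓ x) := rfl

@[simp] theorem Rmap_apply (y : Fin n → ℝ) : (Rmap (k := k) (n := n)) y = (0, y) := rfl

theorem Rmap_image_inj {X Y : Set (Fin n → ℝ)}
    (h : Rmap (k := k) '' X = Rmap (k := k) '' Y) : X = Y := by
  have hinj : Function.Injective (Rmap (k := k) (n := n)) := by
    intro a b hab
    simpa using congrArg Prod.snd hab
  exact Set.image_injective.2 hinj h

/-- The slice of `Rmap '' X + Lmap ℓ '' σ` by the hyperplane `x = 0` is `Rmap '' X`. -/
theorem slice_eq (ℓ : (Fin k → ℝ) →ₗ[ℝ] (Fin n → ℝ)) (X : Set (Fin n → ℝ))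
    (σ : Set (Fin k → ℝ)) (h0 : (0 : Fin k → ℝ) ∈ σ) :
    (Rmap '' X + Lmap ℓ '' σ) ∩ {p | p.1 = 0} = Rmap '' X := by
  ext p
  constructor
  · rintro ⟨hp, hp0⟩
    rw [Set.mem_add] at hp
    obtain ⟨u, ⟨a, ha, rfl⟩, v, ⟨b, hb, rfl⟩, rfl⟩ := hp
    have hb0 : b = 0 := by simpa using hp0
    subst hb0
    simpa using Set.mem_image_of_mem (Rmap (k := k)) ha
  · rintro ⟨a, ha, rfl⟩
    refine ⟨?_, by simp⟩
    rw [Set.mem_add]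
    exact ⟨Rmap a, ⟨a, ha, rfl⟩, Lmap ℓ 0, ⟨0, h0, rfl⟩, by simp⟩

/-- First-coordinate projection of `Rmap '' X + Lmap ℓ '' σ` is `σ` (when `0 ∈ X`). -/
theorem fst_image_eq (ℓ : (Fin k → ℝ) →ₗ[ℝ] (Fin n → ℝ)) (X : Set (Fin n → ℝ))
    (σ : Set (Fin k → ℝ)) (h0 : (0 : Fin n → ℝ) ∈ X) :
    (LinearMap.fst ℝ (Fin k → ℝ) (Fin n → ℝ)) '' (Rmap '' X + Lmap ℓ '' σ) = σ := by
  rw [Set.image_add (LinearMap.fst ℝ (Fin k → ℝ) (Fin n → ℝ))]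
  rw [Set.image_image, Set.image_image]
  have h1 : (fun y => (LinearMap.fst ℝ (Fin k → ℝ) (Fin n → ℝ)) (Rmap y)) '' X
      = ({0} : Set (Fin k → ℝ)) := by
    apply Set.Subset.antisymm
    · rintro x ⟨a, _, rfl⟩; simp
    · rintro x hx
      rcases hx with rfl
      exact ⟨0, h0, rfl⟩
  have h2 : (fun x => (LinearMap.fst ℝ (Fin k → ℝ) (Fin n → ℝ)) (Lmap ℓ x)) '' σ = σ := by
    simp [Set.image_id']
  rw [h1, h2, Set.singleton_add]
  simp

/-- The twisted cone is `Rmap '' τ + Lmap ℓ '' σ` when `Φ` agrees with `ℓ` on `σ`. -/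
theorem twistedCone_eq (Φ : (Fin k → ℝ) → (Fin n → ℝ)) (ℓ : (Fin k → ℝ) →ₗ[ℝ] (Fin n → ℝ))
    (σ : Set (Fin k → ℝ)) (τ : Set (Fin n → ℝ)) (hℓ : ∀ x ∈ σ, Φ x = ℓ x) :
    twistedCone Φ σ τ = Rmap '' τ + Lmap ℓ '' σ := by
  have h1 : graphOver Φ σ = Lmap ℓ '' σ := by
    apply Set.image_congr
    intro x hx
    simp [hℓ x hx]
  have h2 : (({0} : Set (Fin k → ℝ)) ×ˢ τ) = Rmap '' τ := by
    ext ⟨a, b⟩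
    simp [Set.mem_prod, eq_comm, and_comm]
  rw [twistedCone, h1, h2, add_comm]

end Aux2

/-- a collection of rays `{0}×ρ_{i}` (i ∈ A) and `τ̃_{j}` (j ∈ B) of a
twisted product `Σ = Σ_B ⋉_Φ Σ_F` spans a cone of `Σ` iff the `ρ_i` (i ∈ A) span a cone
of `Σ_F` and the `τ_j` (j ∈ B) span a cone of `Σ_B`; in particular the Stanley–Reisner
ideal of `Σ` equals `I_{Σ_B} + I_{Σ_F}` in `ℝ[x_1,…,x_r,y_1,…,y_s]`. -/
theorem stmt11 (k n r s : ℕ) (SB : Set (Set (Fin k → ℝ))) (hB : IsFan SB)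
    (SF : Set (Set (Fin n → ℝ))) (hF : IsFan SF)
    (Φ : (Fin k → ℝ) → (Fin n → ℝ)) (hΦ : IsPLOn Φ SB)
    (e : Fin r → (Fin n → ℝ)) (f : Fin s → (Fin k → ℝ))
    (he : ∀ ρ : Set (Fin n → ℝ), (ρ ∈ SF ∧ IsRayCone ρ) ↔ ∃ i, ρ = posSpan {e i})
    (hf : ∀ τ : Set (Fin k → ℝ), (τ ∈ SB ∧ IsRayCone τ) ↔ ∃ j, τ = posSpan {f j}) :
    (∀ (A : Finset (Fin r)) (B : Finset (Fin s)),
      posSpan ((fun i => ((0 : Fin k → ℝ), e i)) '' (A : Set (Fin r)) ∪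
          (fun j => (f j, Φ (f j))) '' (B : Set (Fin s))) ∈ twistedFan Φ SB SF ↔
        (posSpan (e '' (A : Set (Fin r))) ∈ SF ∧ posSpan (f '' (B : Set (Fin s))) ∈ SB)) ∧
    (Ideal.span {P : MvPolynomial (Fin r ⊕ Fin s) ℝ | ∃ S : Finset (Fin r ⊕ Fin s),
        posSpan ((Sum.elim (fun i => ((0 : Fin k → ℝ), e i))
            (fun j => (f j, Φ (f j)))) '' (S : Set (Fin r ⊕ Fin s))) ∉ twistedFan Φ SB SF ∧
        P = ∏ i ∈ S, MvPolynomial.X i} =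
      Ideal.span {P : MvPolynomial (Fin r ⊕ Fin s) ℝ | ∃ B : Finset (Fin s),
        posSpan (f '' (B : Set (Fin s))) ∉ SB ∧
        P = ∏ j ∈ B, MvPolynomial.X (Sum.inr j)} ⊔
      Ideal.span {P : MvPolynomial (Fin r ⊕ Fin s) ℝ | ∃ A : Finset (Fin r),
        posSpan (e '' (A : Set (Fin r))) ∉ SF ∧
        P = ∏ i ∈ A, MvPolynomial.X (Sum.inl i)}) := by
  classical
  -- the generating sets
  set g1 : Fin r → (Fin k → ℝ) × (Fin n → ℝ) := fun i => ((0 : Fin k → ℝ), e i) with hg1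
  set g2 : Fin s → (Fin k → ℝ) × (Fin n → ℝ) := fun j => (f j, Φ (f j)) with hg2
  -- decomposition of the span of the union of lifted rays
  have decomp : ∀ (ℓ : (Fin k → ℝ) →ₗ[ℝ] (Fin n → ℝ)) (A : Finset (Fin r)) (B : Finset (Fin s)),
      (∀ x ∈ f '' (B : Set (Fin s)), Φ x = ℓ x) →
      posSpan (g1 '' (A : Set (Fin r)) ∪ g2 '' (B : Set (Fin s)))
        = Rmap '' posSpan (e '' (A : Set (Fin r))) + Lmap ℓ '' posSpan (f '' (B : Set (Fin s))) := by
    intro ℓ A B hℓB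
    have h1 : g1 '' (A : Set (Fin r)) = Rmap '' (e '' (A : Set (Fin r))) := by
      rw [Set.image_image]
      apply Set.image_congr
      intro i _
      simp [hg1]
    have h2 : g2 '' (B : Set (Fin s)) = Lmap ℓ '' (f '' (B : Set (Fin s))) := by
      rw [Set.image_image]
      apply Set.image_congr
      intro j hj
      simp [hg2, hℓB (f j) ⟨j, hj, rfl⟩]
    rw [h1, h2, posSpan_union, posSpan_image, posSpan_image]
  -- part 1
  have part1 : ∀ (A : Finset (Fin r)) (B : Finset (Fin s)),
      posSpan (g1 '' (A : Set (Fin r)) ∪ g2 '' (B : Set (Fin s))) ∈ twistedFan Φ SB SF ↔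
        (posSpan (e '' (A : Set (Fin r))) ∈ SF ∧ posSpan (f '' (B : Set (Fin s))) ∈ SB) := by
    intro A B
    constructor
    · rintro ⟨σ, hσ, τ, hτ, h⟩
      obtain ⟨ℓ, hℓ⟩ := hΦ.2 σ hσ
      have h0σ : (0 : Fin k → ℝ) ∈ σ := by
        obtain ⟨sσ, hsσ⟩ := (hB.2.1 σ hσ).1
        rw [hsσ]; exact Submodule.zero_mem _
      have h0τ : (0 : Fin n → ℝ) ∈ τ := by
        obtain ⟨sτ, hsτ⟩ := (hF.2.1 τ hτ).1
        rw [hsτ]; exact Submodule.zero_mem _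
      have hTC : twistedCone Φ σ τ = Rmap '' τ + Lmap ℓ '' σ := twistedCone_eq Φ ℓ σ τ hℓ
      -- project to the first factor to identify σ
      have hfst : posSpan (f '' (B : Set (Fin s))) = σ := by
        have hproj := congrArg
          (Set.image (LinearMap.fst ℝ (Fin k → ℝ) (Fin n → ℝ))) h
        rw [hTC, fst_image_eq ℓ τ σ h0τ, ← posSpan_image] at hproj
        rw [← hproj]
        rw [Set.image_union, Set.image_image, Set.image_image]
        have : (fun i => (LinearMap.fst ℝ (Fin k → ℝ) (Fin n → ℝ)) (g1 i)) ''
            (A : Set (Fin r)) ∪ (fun j => (LinearMap.fst ℝ (Fin k → ℝ) (Fin n → ℝ)) (g2 j)) ''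
            (B : Set (Fin s))
            = (fun _ : Fin r => (0 : Fin k → ℝ)) '' (A : Set (Fin r)) ∪ f '' (B : Set (Fin s)) := by
          rfl
        rw [this, posSpan_union_zero]
        rintro x ⟨i, _, rfl⟩; rfl
      have hσSB : posSpan (f '' (B : Set (Fin s))) ∈ SB := hfst ▸ hσ
      have hℓB : ∀ x ∈ f '' (B : Set (Fin s)), Φ x = ℓ x := by
        intro x hx
        exact hℓ x (hfst ▸ posSpan_subset _ hx)
      have hdec := decomp ℓ A B hℓB
      rw [hfst] at hdec
      have hslice : Rmap (k := k) '' posSpan (e '' (A : Set (Fin r))) = Rmap (k := k) '' τ := by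
        rw [← slice_eq ℓ (posSpan (e '' (A : Set (Fin r)))) σ h0σ,
          ← slice_eq ℓ τ σ h0σ, ← hdec, ← hTC, h]
      exact ⟨(Rmap_image_inj hslice) ▸ hτ, hσSB⟩
    · rintro ⟨hτ, hσ⟩
      obtain ⟨ℓ, hℓ⟩ := hΦ.2 _ hσ
      have hℓB : ∀ x ∈ f '' (B : Set (Fin s)), Φ x = ℓ x := fun x hx =>
        hℓ x (posSpan_subset _ hx)
      refine ⟨posSpan (f '' (B : Set (Fin s))), hσ, posSpan (e '' (A : Set (Fin r))), hτ, ?_⟩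
      rw [decomp ℓ A B hℓB, twistedCone_eq Φ ℓ _ _ hℓ]
  refine ⟨part1, ?_⟩
  -- part 2: the Stanley–Reisner ideal identity
  -- image of a finset of the sum type splits into the two halves
  have himg : ∀ S : Finset (Fin r ⊕ Fin s),
      (Sum.elim g1 g2) '' (S : Set (Fin r ⊕ Fin s))
        = g1 '' (S.toLeft : Set (Fin r)) ∪ g2 '' (S.toRight : Set (Fin s)) := by
    intro S
    ext z
    simp only [Set.mem_image, Set.mem_union, Finset.mem_coe, Finset.mem_toLeft,
      Finset.mem_toRight]
    constructor
    · rintro ⟨x, hx, rfl⟩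
      cases x with
      | inl i => exact Or.inl ⟨i, hx, rfl⟩
      | inr j => exact Or.inr ⟨j, hx, rfl⟩
    · rintro (⟨i, hi, rfl⟩ | ⟨j, hj, rfl⟩)
      exacts [⟨Sum.inl i, hi, rfl⟩, ⟨Sum.inr j, hj, rfl⟩]
  apply le_antisymm
  · rw [Ideal.span_le]
    rintro P ⟨S, hS, rfl⟩
    rw [himg S] at hS
    rw [← Finset.toLeft_disjSum_toRight (u := S), Finset.prod_disjSum]
    have hnot : ¬ (posSpan (e '' (S.toLeft : Set (Fin r))) ∈ SF ∧
        posSpan (f '' (S.toRight : Set (Fin s))) ∈ SB) := fun hc =>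
      hS ((part1 S.toLeft S.toRight).2 hc)
    rcases not_and_or.1 hnot with hc | hc
    · apply Ideal.mem_sup_right
      exact Ideal.mul_mem_right _ _ (Ideal.subset_span ⟨S.toLeft, hc, rfl⟩)
    · apply Ideal.mem_sup_left
      exact Ideal.mul_mem_left _ _ (Ideal.subset_span ⟨S.toRight, hc, rfl⟩)
  · apply sup_le
    · rw [Ideal.span_le]
      rintro P ⟨B, hB2, rfl⟩
      apply Ideal.subset_span
      refine ⟨B.map ⟨Sum.inr, Sum.inr_injective⟩, ?_, ?_⟩
      · intro hmem
        apply hB2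
        have himg2 : (Sum.elim g1 g2) ''
            ((B.map ⟨Sum.inr, Sum.inr_injective⟩ : Finset (Fin r ⊕ Fin s)) :
              Set (Fin r ⊕ Fin s))
            = g1 '' ((∅ : Finset (Fin r)) : Set (Fin r)) ∪ g2 '' (B : Set (Fin s)) := by
          rw [Finset.coe_map, ← Set.image_comp]
          simp
        rw [himg2] at hmem
        exact ((part1 ∅ B).1 hmem).2
      · rw [Finset.prod_map]
        rfl
    · rw [Ideal.span_le]
      rintro P ⟨A, hA2, rfl⟩
      apply Ideal.subset_span
      refine ⟨A.map ⟨Sum.inl, Sum.inl_injective⟩, ?_, ?_⟩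
      · intro hmem
        apply hA2
        have himg2 : (Sum.elim g1 g2) ''
            ((A.map ⟨Sum.inl, Sum.inl_injective⟩ : Finset (Fin r ⊕ Fin s)) :
              Set (Fin r ⊕ Fin s))
            = g1 '' (A : Set (Fin r)) ∪ g2 '' ((∅ : Finset (Fin s)) : Set (Fin s)) := by
          rw [Finset.coe_map, ← Set.image_comp]
          simp
        rw [himg2] at hmem
        exact ((part1 A ∅).1 hmem).1
      · rw [Finset.prod_map]
        rfl
end
end

section
/- Let Σ_B and Σ_F be complete fans (their supports are all of ℝ^k and ℝ^n respectively) and Φ piecewise linear on Σ_B. Then the twisted product Σ_B ⋉_Φ Σ_F is a complete fan in ℝ^k × ℝ^n. -/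
open scoped Pointwise

noncomputable section

lemma mem_twistedCone {k n : ℕ} {Φ : (Fin k → ℝ) → (Fin n → ℝ)} {σ : Set (Fin k → ℝ)}
    {τ : Set (Fin n → ℝ)} {z : (Fin k → ℝ) × (Fin n → ℝ)} :
    z ∈ twistedCone Φ σ τ ↔ z.1 ∈ σ ∧ z.2 - Φ z.1 ∈ τ := by
  constructor
  · rintro ⟨p, ⟨a, ha, rfl⟩, q, hq, rfl⟩
    rw [Set.mem_prod, Set.mem_singleton_iff] at hq
    obtain ⟨h0, ht⟩ := hq
    constructor
    · simpa [h0] using ha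
    · simpa [h0] using ht
  · rintro ⟨h1, h2⟩
    exact ⟨(z.1, Φ z.1), ⟨z.1, h1, rfl⟩, (0, z.2 - Φ z.1), ⟨rfl, h2⟩, by simp⟩

lemma zero_mem_of_sc {E : Type*} [AddCommGroup E] [Module ℝ E] {σ : Set E}
    (h : σ ∩ (-σ) = {0}) : (0 : E) ∈ σ := by
  have h2 : ({0} : Set E) ⊆ σ := h ▸ Set.inter_subset_left
  exact h2 rfl

lemma isFaceOf_iff_exists {E : Type*} [AddCommMonoid E] [Module ℝ E] {F C : Set E} :
    IsFaceOf F C ↔ ∃ ℓ : E →ₗ[ℝ] ℝ, (∀ x ∈ C, ℓ x ≤ 0) ∧ F = {x ∈ C | ℓ x = 0} := by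
  constructor
  · rintro (rfl | h)
    · exact ⟨0, by simp, by simp⟩
    · exact h
  · exact Or.inr

lemma twisted_polyCone {k n : ℕ} {Φ : (Fin k → ℝ) → (Fin n → ℝ)} {σ : Set (Fin k → ℝ)}
    {τ : Set (Fin n → ℝ)} (L : (Fin k → ℝ) →ₗ[ℝ] (Fin n → ℝ)) (hL : ∀ a ∈ σ, Φ a = L a)
    (hσ : IsPolyCone σ) (hτ : IsPolyCone τ) : IsPolyCone (twistedCone Φ σ τ) := by
  obtain ⟨s, hs⟩ := hσ
  obtain ⟨t, ht⟩ := hτ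
  set S := {c : ℝ // 0 ≤ c}
  set f : (Fin k → ℝ) →ₗ[ℝ] (Fin k → ℝ) × (Fin n → ℝ) := LinearMap.prod LinearMap.id L with hf
  set g := LinearMap.inr ℝ (Fin k → ℝ) (Fin n → ℝ) with hg
  refine ⟨s.image f ∪ t.image g, ?_⟩
  have h1 : graphOver Φ σ = f '' σ := by
    unfold graphOver
    exact Set.image_congr fun a ha => by simp [hf, hL a ha]
  have h2 : (({0} : Set (Fin k → ℝ)) ×ˢ τ) = g '' τ := by
    ext z
    simp only [Set.mem_prod, Set.mem_singleton_iff, Set.mem_image, hg, LinearMap.coe_inr]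
    constructor
    · rintro ⟨hz1, hz2⟩; exact ⟨z.2, hz2, by rw [← hz1]⟩
    · rintro ⟨y, hy, rfl⟩; exact ⟨rfl, hy⟩
  have e1 : f '' SetLike.coe (Submodule.span S (s : Set (Fin k → ℝ))) =
      SetLike.coe (Submodule.span S (⇑f '' (s : Set (Fin k → ℝ)))) := by
    have h := congrArg (SetLike.coe) (Submodule.map_span (f.restrictScalars S) (s : Set (Fin k → ℝ)))
    rw [Submodule.map_coe] at h
    exact h
  have e2 : g '' SetLike.coe (Submodule.span S (t : Set (Fin n → ℝ))) =
      SetLike.coe (Submodule.span S (⇑g '' (t : Set (Fin n → ℝ)))) := by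
    have h := congrArg (SetLike.coe) (Submodule.map_span (g.restrictScalars S) (t : Set (Fin n → ℝ)))
    rw [Submodule.map_coe] at h
    exact h
  rw [twistedCone, h1, h2, hs, ht, e1, e2, ← Submodule.coe_sup, ← Submodule.span_union]
  simp [Finset.coe_union, Finset.coe_image]; rfl

lemma twisted_face {k n : ℕ} {Φ : (Fin k → ℝ) → (Fin n → ℝ)} {σ : Set (Fin k → ℝ)}
    {τ : Set (Fin n → ℝ)} (L : (Fin k → ℝ) →ₗ[ℝ] (Fin n → ℝ)) (hL : ∀ a ∈ σ, Φ a = L a)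
    (m : (Fin k → ℝ) →ₗ[ℝ] ℝ) (nn : (Fin n → ℝ) →ₗ[ℝ] ℝ)
    (hm : ∀ a ∈ σ, m a ≤ 0) (hn : ∀ t ∈ τ, nn t ≤ 0) :
    IsFaceOf (twistedCone Φ {a ∈ σ | m a = 0} {t ∈ τ | nn t = 0}) (twistedCone Φ σ τ) := by
  set ℓ : (Fin k → ℝ) × (Fin n → ℝ) →ₗ[ℝ] ℝ :=
    m.comp (LinearMap.fst ℝ _ _) +
      nn.comp (LinearMap.snd ℝ _ _ - L.comp (LinearMap.fst ℝ _ _)) with hℓ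
  have key : ∀ z : (Fin k → ℝ) × (Fin n → ℝ), z.1 ∈ σ →
      ℓ z = m z.1 + nn (z.2 - Φ z.1) := by
    intro z hz
    simp [hℓ, hL z.1 hz]
  refine Or.inr ⟨ℓ, ?_, ?_⟩
  · intro z hz
    rw [mem_twistedCone] at hz
    rw [key z hz.1]
    exact add_nonpos (hm _ hz.1) (hn _ hz.2)
  · ext z
    simp only [mem_twistedCone, Set.mem_setOf_eq]
    constructor
    · rintro ⟨⟨h1, h2⟩, h3, h4⟩
      exact ⟨⟨h1, h3⟩, by rw [key z h1, h2, h4, add_zero]⟩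
    · rintro ⟨⟨h1, h3⟩, h5⟩
      rw [key z h1] at h5
      have a1 := hm _ h1
      have a2 := hn _ h3
      exact ⟨⟨h1, by linarith⟩, h3, by linarith⟩

/-- the twisted product of complete fans is a complete fan. -/
theorem stmt12 (k n : ℕ) (SB : Set (Set (Fin k → ℝ))) (hB : IsFan SB)
    (SF : Set (Set (Fin n → ℝ))) (hF : IsFan SF)
    (Φ : (Fin k → ℝ) → (Fin n → ℝ)) (hΦ : IsPLOn Φ SB)
    (hBc : ⋃₀ SB = Set.univ) (hFc : ⋃₀ SF = Set.univ) :
    IsFan (twistedFan Φ SB SF) ∧ ⋃₀ twistedFan Φ SB SF = Set.univ := by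
  obtain ⟨hBfin, hBcones, hBface, hBint⟩ := hB
  obtain ⟨hFfin, hFcones, hFface, hFint⟩ := hF
  obtain ⟨-, hPL⟩ := hΦ
  have hΦ0 : Φ 0 = 0 := by
    have h0 : (0 : Fin k → ℝ) ∈ ⋃₀ SB := hBc ▸ Set.mem_univ _
    obtain ⟨σ, hσ, h0σ⟩ := h0
    obtain ⟨L, hL⟩ := hPL σ hσ
    rw [hL 0 h0σ, map_zero]
  -- completeness (proved first; also used nowhere else)
  have hcomp : ⋃₀ twistedFan Φ SB SF = Set.univ := by
    ext z
    simp only [Set.mem_sUnion, Set.mem_univ, iff_true]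
    have h1 : z.1 ∈ ⋃₀ SB := hBc ▸ Set.mem_univ _
    obtain ⟨σ, hσ, hz1⟩ := h1
    have h2 : z.2 - Φ z.1 ∈ ⋃₀ SF := hFc ▸ Set.mem_univ _
    obtain ⟨τ, hτ, hz2⟩ := h2
    exact ⟨twistedCone Φ σ τ, ⟨σ, hσ, τ, hτ, rfl⟩, mem_twistedCone.2 ⟨hz1, hz2⟩⟩
  refine ⟨⟨?_, ?_, ?_, ?_⟩, hcomp⟩
  · -- finiteness
    have : twistedFan Φ SB SF = Set.image2 (fun σ τ => twistedCone Φ σ τ) SB SF := by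
      ext C
      simp only [twistedFan, Set.mem_setOf_eq, Set.mem_image2]
      constructor
      · rintro ⟨σ, hσ, τ, hτ, rfl⟩; exact ⟨σ, hσ, τ, hτ, rfl⟩
      · rintro ⟨σ, hσ, τ, hτ, rfl⟩; exact ⟨σ, hσ, τ, hτ, rfl⟩
    rw [this]
    exact Set.Finite.image2 _ hBfin hFfin
  · -- poly cone + strong convexity
    rintro C ⟨σ, hσ, τ, hτ, rfl⟩
    obtain ⟨L, hL⟩ := hPL σ hσ
    have h0σ : (0 : Fin k → ℝ) ∈ σ := zero_mem_of_sc (hBcones σ hσ).2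
    have h0τ : (0 : Fin n → ℝ) ∈ τ := zero_mem_of_sc (hFcones τ hτ).2
    refine ⟨twisted_polyCone L hL (hBcones σ hσ).1 (hFcones τ hτ).1, ?_⟩
    ext z
    simp only [Set.mem_inter_iff, Set.mem_neg, mem_twistedCone, Set.mem_singleton_iff]
    constructor
    · rintro ⟨⟨h1, h2⟩, h3, h4⟩
      have hz1 : z.1 = 0 := by
        have hmem : z.1 ∈ σ ∩ (-σ) := ⟨h1, by simpa using h3⟩
        rw [(hBcones σ hσ).2] at hmem
        exact hmem
      have hz2 : z.2 = 0 := by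
        have e1 : z.2 ∈ τ := by simpa [hz1, hΦ0] using h2
        have e2 : -z.2 ∈ τ := by simpa [hz1, hΦ0] using h4
        have hmem : z.2 ∈ τ ∩ (-τ) := ⟨e1, by simpa using e2⟩
        rw [(hFcones τ hτ).2] at hmem
        exact hmem
      exact Prod.ext hz1 hz2
    · rintro rfl
      refine ⟨⟨by simpa using h0σ, by simpa [hΦ0] using h0τ⟩, ?_, ?_⟩
      · simpa using h0σ
      · simpa [hΦ0] using h0τ
  · -- closed under faces
    rintro C ⟨σ, hσ, τ, hτ, rfl⟩ G hG
    obtain ⟨L, hL⟩ := hPL σ hσ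
    have h0σ : (0 : Fin k → ℝ) ∈ σ := zero_mem_of_sc (hBcones σ hσ).2
    have h0τ : (0 : Fin n → ℝ) ∈ τ := zero_mem_of_sc (hFcones τ hτ).2
    rcases hG with rfl | ⟨ℓ, hℓ, rfl⟩
    · exact ⟨σ, hσ, τ, hτ, rfl⟩
    set m : (Fin k → ℝ) →ₗ[ℝ] ℝ :=
      ℓ.comp (LinearMap.inl ℝ _ _) + (ℓ.comp (LinearMap.inr ℝ _ _)).comp L with hmdef
    set nn : (Fin n → ℝ) →ₗ[ℝ] ℝ := ℓ.comp (LinearMap.inr ℝ _ _) with hndef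
    have hsplit : ∀ z : (Fin k → ℝ) × (Fin n → ℝ), ℓ z = ℓ (z.1, 0) + ℓ (0, z.2) := by
      intro z
      rw [← map_add]
      simp
    have hm : ∀ a ∈ σ, m a ≤ 0 := by
      intro a ha
      have hmem : (a, Φ a) ∈ twistedCone Φ σ τ :=
        mem_twistedCone.2 ⟨ha, by simpa using h0τ⟩
      have := hℓ _ hmem
      rw [hsplit (a, Φ a)] at this
      simpa [hmdef, hndef, hL a ha] using this
    have hn : ∀ t ∈ τ, nn t ≤ 0 := by
      intro t ht
      have hmem : ((0 : Fin k → ℝ), t) ∈ twistedCone Φ σ τ :=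
        mem_twistedCone.2 ⟨h0σ, by simpa [hΦ0] using ht⟩
      have := hℓ _ hmem
      simpa [hndef] using this
    have key : ∀ z : (Fin k → ℝ) × (Fin n → ℝ), z.1 ∈ σ →
        m z.1 + nn (z.2 - Φ z.1) = ℓ z := by
      intro z hz
      rw [hsplit z]
      simp only [hmdef, hndef, LinearMap.add_apply, LinearMap.comp_apply,
        LinearMap.inl_apply, LinearMap.inr_apply, map_sub, hL z.1 hz]
      have h2 : ℓ (0, z.2 - L z.1) = ℓ (0, z.2) - ℓ (0, L z.1) := by
        rw [← map_sub]
        simp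
      ring_nf
    refine ⟨{a ∈ σ | m a = 0}, hBface σ hσ _ (Or.inr ⟨m, hm, rfl⟩),
      {t ∈ τ | nn t = 0}, hFface τ hτ _ (Or.inr ⟨nn, hn, rfl⟩), ?_⟩
    ext z
    simp only [Set.mem_setOf_eq, mem_twistedCone]
    constructor
    · rintro ⟨⟨h1, h2⟩, h3⟩
      have hk := key z h1
      rw [h3] at hk
      have a1 := hm _ h1
      have a2 := hn _ h2
      exact ⟨⟨h1, by linarith⟩, h2, by linarith⟩
    · rintro ⟨⟨h1, h4⟩, h2, h5⟩
      refine ⟨⟨h1, h2⟩, ?_⟩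
      rw [← key z h1, h4, h5, add_zero]
  · -- intersections
    rintro C ⟨σ, hσ, τ, hτ, rfl⟩ D ⟨σ', hσ', τ', hτ', rfl⟩
    have hCD : twistedCone Φ σ τ ∩ twistedCone Φ σ' τ' =
        twistedCone Φ (σ ∩ σ') (τ ∩ τ') := by
      ext z
      simp only [Set.mem_inter_iff, mem_twistedCone]
      tauto
    obtain ⟨m, hm, hmeq⟩ := isFaceOf_iff_exists.1 (hBint σ hσ σ' hσ').1
    obtain ⟨m', hm', hmeq'⟩ := isFaceOf_iff_exists.1 (hBint σ hσ σ' hσ').2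
    obtain ⟨nn, hn, hneq⟩ := isFaceOf_iff_exists.1 (hFint τ hτ τ' hτ').1
    obtain ⟨nn', hn', hneq'⟩ := isFaceOf_iff_exists.1 (hFint τ hτ τ' hτ').2
    obtain ⟨L, hL⟩ := hPL σ hσ
    obtain ⟨L', hL'⟩ := hPL σ' hσ'
    constructor
    · rw [hCD, hmeq, hneq]
      exact twisted_face L hL m nn hm hn
    · rw [hCD, hmeq', hneq']
      exact twisted_face L' hL' m' nn' hm' hn'
end
end
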